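/- Let e₁, e₂ ∈ ℝ⁴ satisfy ⟪e₁,e₁⟫ = ⟪e₂,e₂⟫ = 1 and ⟪e₁,e₂⟫ = 0, and suppose the plane span{e₁,e₂} is not contained in {0}×ℝ³ (i.e. the 0-th coordinate of e₁ or of e₂ is nonzero). Write eᵢ⁰ for the 0-th coordinate of eᵢ and ∂₀ = (1,0,0,0). Then the vector τ = (∂₀ + e₁⁰e₁ + e₂⁰e₂)/√(1+(e₁⁰)²+(e₂⁰)²) satisfies ⟪τ,τ⟫ = −1, ⟪τ,e₁⟫ = ⟪τ,e₂⟫ = 0 and ⟪τ,∂₀⟫ < 0; there exists ν ∈ ℝ⁴ with ⟪ν,ν⟫ = 1, ν₀ = 0, ⟪ν,τ⟫ = ⟪ν,e₁⟫ = ⟪ν,e₂⟫ = 0; and for every t ∈ ℝ⁴ with ⟪t,t⟫ = −1, ⟪t,e₁⟫ = ⟪t,e₂⟫ = 0 and t₀ > 0, one has τ₀ ≤ t₀. -/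

import Mathlib

noncomputable def mink (x y : Fin 4 → ℝ) : ℝ :=
  -(x 0 * y 0) + x 1 * y 1 + x 2 * y 2 + x 3 * y 3

private lemma aux_cancel2 (c r x0 x1 x2 x3 y0 y1 y2 y3 : ℝ) (hc : c ≠ 0)
    (h : -((c*x0)*(c*y0)) + (c*x1)*(c*y1) + (c*x2)*(c*y2) + (c*x3)*(c*y3) = (c*c) * r) :
    -(x0*y0) + x1*y1 + x2*y2 + x3*y3 = r := by
  apply mul_left_cancel₀ (mul_ne_zero hc hc)
  linear_combination h

private lemma aux_cancel1 (c r x0 x1 x2 x3 y0 y1 y2 y3 : ℝ) (hc : c ≠ 0)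
    (h : -((c*x0)*y0) + (c*x1)*y1 + (c*x2)*y2 + (c*x3)*y3 = c * r) :
    -(x0*y0) + x1*y1 + x2*y2 + x3*y3 = r := by
  apply mul_left_cancel₀ hc
  linear_combination h

set_option maxHeartbeats 2000000 in
theorem stmt0 (e₁ e₂ : Fin 4 → ℝ)
    (h11 : mink e₁ e₁ = 1) (h22 : mink e₂ e₂ = 1) (h12 : mink e₁ e₂ = 0)
    (hplane : e₁ 0 ≠ 0 ∨ e₂ 0 ≠ 0)
    (d0 : Fin 4 → ℝ) (hd0 : d0 = ![1, 0, 0, 0])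
    (τ : Fin 4 → ℝ)
    (hτ : τ = (1 / Real.sqrt (1 + (e₁ 0) ^ 2 + (e₂ 0) ^ 2)) • (d0 + e₁ 0 • e₁ + e₂ 0 • e₂)) :
    mink τ τ = -1 ∧ mink τ e₁ = 0 ∧ mink τ e₂ = 0 ∧ mink τ d0 < 0 ∧
    (∃ ν : Fin 4 → ℝ, mink ν ν = 1 ∧ ν 0 = 0 ∧ mink ν τ = 0 ∧ mink ν e₁ = 0 ∧ mink ν e₂ = 0) ∧
    (∀ t : Fin 4 → ℝ, mink t t = -1 → mink t e₁ = 0 → mink t e₂ = 0 → 0 < t 0 → τ 0 ≤ t 0) := by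
  have hS : (0:ℝ) < 1 + (e₁ 0)^2 + (e₂ 0)^2 := by positivity
  set c := Real.sqrt (1 + (e₁ 0)^2 + (e₂ 0)^2) with hc
  have hc2 : c^2 = 1 + (e₁ 0)^2 + (e₂ 0)^2 := Real.sq_sqrt hS.le
  have hcpos : 0 < c := Real.sqrt_pos.mpr hS
  have hcne : c ≠ 0 := hcpos.ne'
  simp only [mink] at h11 h22 h12
  have hτ0 : τ 0 = (1 + e₁ 0 * e₁ 0 + e₂ 0 * e₂ 0) / c := by
    rw [hτ, hd0]
    simp only [Pi.smul_apply, Pi.add_apply, smul_eq_mul, Matrix.cons_val_zero]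
    ring
  have hτ1 : τ 1 = (e₁ 0 * e₁ 1 + e₂ 0 * e₂ 1) / c := by
    rw [hτ, hd0]
    simp only [Pi.smul_apply, Pi.add_apply, smul_eq_mul, Matrix.cons_val_one, Matrix.head_cons,
      Matrix.cons_val_zero]
    ring
  have hτ2 : τ 2 = (e₁ 0 * e₁ 2 + e₂ 0 * e₂ 2) / c := by
    rw [hτ, hd0]
    have : (![(1:ℝ), 0, 0, 0]) 2 = 0 := by simp
    simp only [Pi.smul_apply, Pi.add_apply, smul_eq_mul, this]
    ring
  have hτ3 : τ 3 = (e₁ 0 * e₁ 3 + e₂ 0 * e₂ 3) / c := by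
    rw [hτ, hd0]
    have : (![(1:ℝ), 0, 0, 0]) 3 = 0 := by simp
    simp only [Pi.smul_apply, Pi.add_apply, smul_eq_mul, this]
    ring
  have hτc0 : c * τ 0 = 1 + e₁ 0 * e₁ 0 + e₂ 0 * e₂ 0 := by rw [hτ0]; field_simp
  have hτc1 : c * τ 1 = e₁ 0 * e₁ 1 + e₂ 0 * e₂ 1 := by rw [hτ1]; field_simp
  have hτc2 : c * τ 2 = e₁ 0 * e₁ 2 + e₂ 0 * e₂ 2 := by rw [hτ2]; field_simp
  have hτc3 : c * τ 3 = e₁ 0 * e₁ 3 + e₂ 0 * e₂ 3 := by rw [hτ3]; field_simp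
  have hτ0c : τ 0 = c := by
    apply mul_left_cancel₀ hcne
    rw [hτc0]; nlinarith [hc2]
  refine ⟨?_, ?_, ?_, ?_, ?_, ?_⟩
  · simp only [mink]
    refine aux_cancel2 c (-1) _ _ _ _ _ _ _ _ hcne ?_
    rw [hτc0, hτc1, hτc2, hτc3]
    linear_combination (e₁ 0^2) * h11 + (e₂ 0^2) * h22 + (2 * e₁ 0 * e₂ 0) * h12 + hc2
  · simp only [mink]
    refine aux_cancel1 c 0 _ _ _ _ _ _ _ _ hcne ?_
    rw [hτc0, hτc1, hτc2, hτc3]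
    linear_combination (e₁ 0) * h11 + (e₂ 0) * h12
  · simp only [mink]
    refine aux_cancel1 c 0 _ _ _ _ _ _ _ _ hcne ?_
    rw [hτc0, hτc1, hτc2, hτc3]
    linear_combination (e₂ 0) * h22 + (e₁ 0) * h12
  · have h4 : mink τ d0 = -c := by
      simp only [mink, hd0, hτ0c]
      simp
    rw [h4]
    linarith
  · set V1 := e₁ 2 * e₂ 3 - e₁ 3 * e₂ 2 with hV1
    set V2 := e₁ 3 * e₂ 1 - e₁ 1 * e₂ 3 with hV2
    set V3 := e₁ 1 * e₂ 2 - e₁ 2 * e₂ 1 with hV3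
    have hcn1 : c * (V1/c) = V1 := by field_simp
    have hcn2 : c * (V2/c) = V2 := by field_simp
    have hcn3 : c * (V3/c) = V3 := by field_simp
    refine ⟨![0, V1/c, V2/c, V3/c], ?_, by simp, ?_, ?_, ?_⟩
    · simp only [mink]
      simp only [Matrix.cons_val_zero, Matrix.cons_val_one, Matrix.head_cons]
      have e2 : (![(0:ℝ), V1/c, V2/c, V3/c]) 2 = V2/c := by simp
      have e3 : (![(0:ℝ), V1/c, V2/c, V3/c]) 3 = V3/c := by simp
      rw [e2, e3]
      refine aux_cancel2 c 1 _ _ _ _ _ _ _ _ hcne ?_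
      rw [hcn1, hcn2, hcn3]
      rw [hV1, hV2, hV3]
      linear_combination (e₂ 1^2 + e₂ 2^2 + e₂ 3^2) * h11 + (1 + e₁ 0^2) * h22 -
        (e₁ 1 * e₂ 1 + e₁ 2 * e₂ 2 + e₁ 3 * e₂ 3 + e₁ 0 * e₂ 0) * h12 - hc2
    · simp only [mink]
      simp only [Matrix.cons_val_zero, Matrix.cons_val_one, Matrix.head_cons]
      have e2 : (![(0:ℝ), V1/c, V2/c, V3/c]) 2 = V2/c := by simp
      have e3 : (![(0:ℝ), V1/c, V2/c, V3/c]) 3 = V3/c := by simp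
      rw [e2, e3]
      refine aux_cancel2 c 0 _ _ _ _ _ _ _ _ hcne ?_
      rw [hcn1, hcn2, hcn3, hτc0, hτc1, hτc2, hτc3]
      rw [hV1, hV2, hV3]
      ring
    · simp only [mink]
      simp only [Matrix.cons_val_zero, Matrix.cons_val_one, Matrix.head_cons]
      have e2 : (![(0:ℝ), V1/c, V2/c, V3/c]) 2 = V2/c := by simp
      have e3 : (![(0:ℝ), V1/c, V2/c, V3/c]) 3 = V3/c := by simp
      rw [e2, e3]
      refine aux_cancel1 c 0 _ _ _ _ _ _ _ _ hcne ?_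
      rw [hcn1, hcn2, hcn3]
      rw [hV1, hV2, hV3]
      ring
    · simp only [mink]
      simp only [Matrix.cons_val_zero, Matrix.cons_val_one, Matrix.head_cons]
      have e2 : (![(0:ℝ), V1/c, V2/c, V3/c]) 2 = V2/c := by simp
      have e3 : (![(0:ℝ), V1/c, V2/c, V3/c]) 3 = V3/c := by simp
      rw [e2, e3]
      refine aux_cancel1 c 0 _ _ _ _ _ _ _ _ hcne ?_
      rw [hcn1, hcn2, hcn3]
      rw [hV1, hV2, hV3]
      ring
  · intro t ht ht1 ht2 ht0
    simp only [mink] at ht ht1 ht2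
    have keyeq : c^2 + (t 1 * (e₁ 2 * e₂ 3 - e₁ 3 * e₂ 2)
        - t 2 * (e₁ 1 * e₂ 3 - e₁ 3 * e₂ 1)
        + t 3 * (e₁ 1 * e₂ 2 - e₁ 2 * e₂ 1))^2 = (t 0)^2 := by
      linear_combination hc2 +
        ((e₁ 1^2 + e₁ 2^2 + e₁ 3^2) * (e₂ 1^2 + e₂ 2^2 + e₂ 3^2)
          - (e₁ 1 * e₂ 1 + e₁ 2 * e₂ 2 + e₁ 3 * e₂ 3)^2) * ht +
        ((t 0^2 - 1) * (e₂ 1^2 + e₂ 2^2 + e₂ 3^2) - (t 0 * e₂ 0)^2) * h11 +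
        ((t 0^2 - 1) * (1 + e₁ 0^2) - (t 0 * e₁ 0)^2) * h22 +
        (2 * (t 0 * e₁ 0) * (t 0 * e₂ 0)
          - (t 0^2 - 1) * (e₁ 1 * e₂ 1 + e₁ 2 * e₂ 2 + e₁ 3 * e₂ 3 + e₁ 0 * e₂ 0)) * h12 +
        (2 * (t 1 * e₂ 1 + t 2 * e₂ 2 + t 3 * e₂ 3) * (e₁ 1 * e₂ 1 + e₁ 2 * e₂ 2 + e₁ 3 * e₂ 3)
          - (t 1 * e₁ 1 + t 2 * e₁ 2 + t 3 * e₁ 3 + t 0 * e₁ 0) * (e₂ 1^2 + e₂ 2^2 + e₂ 3^2)) * ht1 +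
        (2 * (t 0 * e₁ 0) * (e₁ 1 * e₂ 1 + e₁ 2 * e₂ 2 + e₁ 3 * e₂ 3)
          - (t 1 * e₂ 1 + t 2 * e₂ 2 + t 3 * e₂ 3 + t 0 * e₂ 0) * (e₁ 1^2 + e₁ 2^2 + e₁ 3^2)) * ht2
    rw [hτ0c]
    nlinarith [keyeq, sq_nonneg (t 1 * (e₁ 2 * e₂ 3 - e₁ 3 * e₂ 2)
        - t 2 * (e₁ 1 * e₂ 3 - e₁ 3 * e₂ 1)
        + t 3 * (e₁ 1 * e₂ 2 - e₁ 2 * e₂ 1)), hcpos, ht0]
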